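/- Let Γ be a discrete group of affine transformations of Minkowski space V whose linear parts preserve the Lorentzian form ℓ and the cone C, acting freely and properly, such that the quotient V/Γ is causal. Then the linear part group G = λ(Γ) contains no hyperbolic element. -/

import Mathlib

open Set

/-- A symmetric bilinear form of Lorentzian signature `(+,−,…,−)`. -/
def IsLorentzian {V : Type*} [AddCommGroup V] [Module ℝ V]
    (ℓ : V →ₗ[ℝ] V →ₗ[ℝ] ℝ) : Prop :=
  (∀ u w : V, ℓ u w = ℓ w u) ∧
  ∃ (n : ℕ) (e : Module.Basis (Fin (n + 1)) ℝ V),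
    (∀ i j, i ≠ j → ℓ (e i) (e j) = 0) ∧ ℓ (e 0) (e 0) = 1 ∧
    ∀ i, i ≠ 0 → ℓ (e i) (e i) = -1

/-- A Lorentzian form is nondegenerate. -/
lemma IsLorentzian.nondeg {V : Type*} [AddCommGroup V] [Module ℝ V]
    {ℓ : V →ₗ[ℝ] V →ₗ[ℝ] ℝ} (hL : IsLorentzian ℓ) {v : V}
    (h : ∀ u : V, ℓ v u = 0) : v = 0 := by
  obtain ⟨hsym, n, e, horth, h0, hneg⟩ := hL
  have hrepr : ∀ j, e.repr v j = 0 := by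
    intro j
    have h1 : ℓ (e j) v = e.repr v j * ℓ (e j) (e j) := by
      conv_lhs => rw [← e.sum_repr v]
      rw [map_sum]
      rw [Finset.sum_eq_single j]
      · rw [map_smul]; rfl
      · intro i _ hij
        rw [map_smul, horth j i (Ne.symm hij)]
        simp
      · intro hj; exact absurd (Finset.mem_univ j) hj
    have h2 : ℓ (e j) v = 0 := by rw [hsym]; exact h (e j)
    have hdiag : ℓ (e j) (e j) ≠ 0 := by
      by_cases hj : j = 0
      · subst hj; rw [h0]; norm_num
      · rw [hneg j hj]; norm_num
    have := h2 ▸ h1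
    exact (mul_eq_zero.mp this.symm).resolve_right hdiag
  have : e.repr v = 0 := Finsupp.ext hrepr
  exact e.repr.map_eq_zero_iff.mp this

lemma lin_coeff_zero {a b : ℝ} (h : ∀ t : ℝ, a * t + b < 0) : a = 0 := by
  by_contra ha
  have := h ((1 - b) / a)
  rw [mul_div_cancel₀ _ ha] at this
  linarith

theorem causal_no_hyperbolic
    {V : Type*} [NormedAddCommGroup V] [NormedSpace ℝ V] [FiniteDimensional ℝ V]
    (ℓ : V →ₗ[ℝ] V →ₗ[ℝ] ℝ) (hL : IsLorentzian ℓ)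
    (C : Set V) (hCclosed : IsClosed C) (hCconv : Convex ℝ C)
    (hCcone : ∀ (t : ℝ) (v : V), 0 ≤ t → v ∈ C → t • v ∈ C)
    (hCunion : C ∪ (-C) = {v : V | 0 ≤ ℓ v v})
    (hCpointed : C ∩ (-C) = {(0 : V)})
    (Γ : Subgroup (V ≃ᵃ[ℝ] V))
    (hpres : ∀ γ ∈ Γ, ∀ u w : V, ℓ (γ.linear u) (γ.linear w) = ℓ u w)
    (hCinv : ∀ γ ∈ Γ, γ.linear '' C = C)
    (hfree : ∀ γ ∈ Γ, γ ≠ 1 → ∀ v : V, γ v ≠ v)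
    (hproper : ∀ L : Set V, IsCompact L →
      {γ : V ≃ᵃ[ℝ] V | γ ∈ Γ ∧ (γ '' L ∩ L).Nonempty}.Finite)
    (hcausal : ∀ v : V, ∀ γ ∈ Γ, γ ≠ 1 → ℓ (γ v - v) (γ v - v) < 0) :
    ∀ γ ∈ Γ, ¬∃ (μ : ℝ) (v : V), v ≠ 0 ∧ v ∈ frontier C ∧
      γ.linear v = μ • v ∧ 0 < μ ∧ μ ≠ 1 := by
  rintro γ hγ ⟨μ, v, hv0, hvfr, heig, hμpos, hμ1⟩
  have hsym := hL.1
  -- γ ≠ 1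
  have hγ1 : γ ≠ 1 := by
    rintro rfl
    have h1 : (1 : V ≃ᵃ[ℝ] V).linear v = v := rfl
    rw [h1] at heig
    have : (μ - 1) • v = 0 := by rw [sub_smul, one_smul, ← heig, sub_self]
    rcases smul_eq_zero.mp this with h | h
    · exact hμ1 (by linarith [sub_eq_zero.mp h])
    · exact hv0 h
  -- continuity of the quadratic form
  have hc : Continuous fun w : V => ℓ w w := by
    have h1 : Continuous fun w : V =>
        (LinearMap.toContinuousLinearMap (ℓ w) : V →L[ℝ] ℝ) :=
      ((LinearMap.toContinuousLinearMap.toLinearMap.comp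
        ℓ)).continuous_of_finiteDimensional
    have := h1.clm_apply continuous_id
    simpa using this
  -- v ∈ C
  have hvC : v ∈ C := hCclosed.closure_eq ▸ hvfr.1
  -- ℓ v v = 0
  have hge : 0 ≤ ℓ v v := by
    have : v ∈ C ∪ (-C) := Or.inl hvC
    rw [hCunion] at this
    exact this
  have hnull : ℓ v v = 0 := by
    refine le_antisymm ?_ hge
    by_contra hpos
    push_neg at hpos
    have hvnot : v ∉ (-C) := by
      intro h
      have : v ∈ C ∩ (-C) := ⟨hvC, h⟩
      rw [hCpointed] at this
      exact hv0 this
    have hUopen : IsOpen ({w : V | 0 < ℓ w w} ∩ (-C)ᶜ) :=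
      (isOpen_lt continuous_const hc).inter hCclosed.neg.isOpen_compl
    have hUsub : {w : V | 0 < ℓ w w} ∩ (-C)ᶜ ⊆ C := by
      rintro w ⟨hw1, hw2⟩
      have : w ∈ C ∪ (-C) := by rw [hCunion]; exact le_of_lt (show (0:ℝ) < ℓ w w from hw1)
      exact this.resolve_right hw2
    have hvint : v ∈ interior C :=
      interior_maximal hUsub hUopen ⟨hpos, hvnot⟩
    exact hvfr.2 hvint
  -- affine decomposition
  have hγw : ∀ w : V, γ w = γ.linear w + γ 0 := by
    intro w
    have h1 : γ (w +ᵥ (0 : V)) = γ.linear w +ᵥ γ 0 := γ.map_vadd 0 w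
    simpa [vadd_eq_add] using h1
  set g : V →ₗ[ℝ] V := (γ.linear : V →ₗ[ℝ] V) with hg
  set τ : V := γ 0 with hτ
  -- ℓ v (g u) = μ⁻¹ * ℓ v u
  have hginv : ∀ u : V, ℓ v (g u) = μ⁻¹ * ℓ v u := by
    intro u
    have := hpres γ hγ v u
    rw [heig] at this
    have h2 : μ * ℓ v (g u) = ℓ v u := by
      have h3 : μ * ℓ v (γ.linear u) = ℓ v u := by simpa [smul_eq_mul] using this
      exact h3
    field_simp
    linarith [h2]
  -- for every u : ℓ v (g u - u + τ) = 0
  have hkey : ∀ u : V, ℓ v (g u - u + τ) = 0 := by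
    intro u
    set z : V := g u - u + τ with hz
    have hlin : ∀ t : ℝ, (2 * ((μ - 1) * ℓ v z)) * t + ℓ z z < 0 := by
      intro t
      have hca := hcausal (t • v + u) γ hγ hγ1
      have hexp : γ (t • v + u) - (t • v + u) = (t * (μ - 1)) • v + z := by
        rw [hγw (t • v + u)]
        have : γ.linear (t • v + u) = t • (μ • v) + g u := by
          rw [map_add, map_smul, heig]; rfl
        rw [this, hz]
        simp only [smul_smul]
        module
      rw [hexp] at hca
      have hexpand : ℓ ((t * (μ - 1)) • v + z) ((t * (μ - 1)) • v + z)
          = (t * (μ - 1))^2 * ℓ v v + 2 * (t * (μ - 1)) * ℓ v z + ℓ z z := by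
        simp only [map_add, map_smul, smul_eq_mul, LinearMap.add_apply,
          LinearMap.smul_apply]
        rw [hsym z v]
        ring
      rw [hexpand, hnull] at hca
      calc (2 * ((μ - 1) * ℓ v z)) * t + ℓ z z
          = (t * (μ - 1))^2 * 0 + 2 * (t * (μ - 1)) * ℓ v z + ℓ z z := by ring
        _ < 0 := hca
    have h0 : 2 * ((μ - 1) * ℓ v z) = 0 := lin_coeff_zero hlin
    have hμ1' : μ - 1 ≠ 0 := sub_ne_zero.mpr hμ1
    have : (μ - 1) * ℓ v z = 0 := by linarith
    exact (mul_eq_zero.mp this).resolve_left hμ1'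
  -- deduce ℓ v u = 0 for all u
  have hall : ∀ u : V, ℓ v u = 0 := by
    have hτ0 : ℓ v τ = 0 := by
      have := hkey 0
      simpa using this
    intro u
    have h1 := hkey u
    have h2 : ℓ v (g u - u + τ) = (μ⁻¹ - 1) * ℓ v u + ℓ v τ := by
      rw [map_add, map_sub, hginv u]
      ring
    rw [h2, hτ0, add_zero] at h1
    have hμinv : μ⁻¹ - 1 ≠ 0 := by
      intro h
      have : μ⁻¹ = 1 := by linarith
      exact hμ1 (by field_simp at this; linarith)
    exact (mul_eq_zero.mp h1).resolve_left hμinv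
  exact hv0 (hL.nondeg hall)
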